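/- Let l be an affine line in the Euclidean plane, O a point not on l, and A the orthogonal projection of O onto l. Fix r > 0 and let A* be the image of A under inversion in the circle with center O and radius r. Then for every point B on l, the image B* of B under this inversion lies on the circle with diameter OA*; that is, dist B* (midpoint of O and A*) = dist O A* / 2. -/

import Mathlib

open EuclideanGeometry Real

/-- The inversion image of a line `l` not through the center `O` of inversion lies on
the circle with diameter `OA*`, where `A*` is the inversion image of the orthogonal
projection `A` of `O` onto `l`. -/
theorem inversion_image_of_line_mem_circle
    (l : AffineSubspace ℝ (EuclideanSpace ℝ (Fin 2)))
    [Nonempty l] [Submodule.HasOrthogonalProjection l.direction]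
    (hline : Module.finrank ℝ l.direction = 1)
    (O : EuclideanSpace ℝ (Fin 2)) (hO : O ∉ l)
    (r : ℝ) (hr : 0 < r)
    (A Astar B Bstar : EuclideanSpace ℝ (Fin 2))
    (hA : A = EuclideanGeometry.orthogonalProjection l O)
    (hAstar : Astar = EuclideanGeometry.inversion O r A)
    (hB : B ∈ l)
    (hBstar : Bstar = EuclideanGeometry.inversion O r B) :
    dist Bstar (midpoint ℝ O Astar) = dist O Astar / 2 := by
  have hAl : A ∈ l := hA ▸ orthogonalProjection_mem O
  have hOA : O ≠ A := fun h => hO (h ▸ hAl)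
  have hOB : O ≠ B := fun h => hO (h ▸ hB)
  set a : EuclideanSpace ℝ (Fin 2) := A - O with ha_def
  set b : EuclideanSpace ℝ (Fin 2) := B - O with hb_def
  have ha : (0:ℝ) < ‖a‖ := norm_pos_iff.mpr (sub_ne_zero.mpr (Ne.symm hOA))
  have hb : (0:ℝ) < ‖b‖ := norm_pos_iff.mpr (sub_ne_zero.mpr (Ne.symm hOB))
  have hperp : inner ℝ (B - A) (O - A) = (0:ℝ) := by
    apply Submodule.inner_right_of_mem_orthogonal (K := l.direction)
    · simpa [vsub_eq_sub] using AffineSubspace.vsub_mem_direction hB hAl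
    · simpa [vsub_eq_sub, ← hA] using
        vsub_orthogonalProjection_mem_direction_orthogonal l O
  have hab : inner ℝ b a = ‖a‖^2 := by
    have h2 : inner ℝ (b - a) (-a) = (0:ℝ) := by
      have : B - A = b - a := by simp [ha_def, hb_def]
      have h3 : O - A = -a := by simp [ha_def]
      rw [← this, ← h3]; exact hperp
    simp only [inner_sub_left, inner_neg_right, real_inner_self_eq_norm_sq] at h2
    linarith
  have hdA : dist A O = ‖a‖ := by rw [dist_eq_norm]
  have hdB : dist B O = ‖b‖ := by rw [dist_eq_norm]
  have hAs : Astar - O = (r/‖a‖)^2 • a := by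
    rw [hAstar, inversion, hdA]; simp [vsub_eq_sub, vadd_eq_add]; rfl
  have hBs : Bstar - midpoint ℝ O Astar = (r/‖b‖)^2 • b - ((1:ℝ)/2) • ((r/‖a‖)^2 • a) := by
    have hm : midpoint ℝ O Astar - O = ((1:ℝ)/2) • ((r/‖a‖)^2 • a) := by
      have := midpoint_vsub_left (R := ℝ) O Astar
      rw [vsub_eq_sub, vsub_eq_sub, hAs] at this
      rw [this, invOf_eq_inv]
      module
    have : Bstar - midpoint ℝ O Astar = (Bstar - O) - (midpoint ℝ O Astar - O) := by abel
    rw [this, hm, hBstar, inversion, hdB]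
    simp [vsub_eq_sub, vadd_eq_add]; rfl
  rw [dist_eq_norm, dist_comm, dist_eq_norm, hBs, hAs]
  have hrhs : ‖(r/‖a‖)^2 • a‖ = r^2/‖a‖ := by
    rw [norm_smul]
    rw [Real.norm_eq_abs, abs_of_nonneg (by positivity)]
    field_simp
  rw [hrhs]
  have hsq : ‖(r/‖b‖)^2 • b - ((1:ℝ)/2) • ((r/‖a‖)^2 • a)‖^2 = (r^2/‖a‖/2)^2 := by
    rw [norm_sub_sq_real]
    simp only [norm_smul, inner_smul_left, inner_smul_right, real_inner_self_eq_norm_sq,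
      Real.norm_eq_abs, conj_trivial]
    rw [abs_of_nonneg (by positivity : (0:ℝ) ≤ (r/‖b‖)^2),
        abs_of_nonneg (by norm_num : (0:ℝ) ≤ (1:ℝ)/2),
        abs_of_nonneg (by positivity : (0:ℝ) ≤ (r/‖a‖)^2), hab]
    field_simp
    ring
  rw [← Real.sqrt_sq (norm_nonneg _), hsq, Real.sqrt_sq (by positivity)]
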